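/- arXiv:2311.03341 — 2 statements merged into one kernel-verified Lean document; each statement's English description precedes it below -/
import Mathlib

section
/- For all integers r, t ≥ 2, there exist constants 0 < ε ≤ 1/2 and c > 1 such that for every integer s ≥ 1 and every positive integer n, every n-vertex graph that contains no K_{s,s} subgraph and no induced subgraph isomorphic to K_{r,t} has at most c·s^4·n^{2−ε} edges. -/
open SimpleGraph

/-- `G` contains a copy of `H` as a (not necessarily induced) subgraph. -/
def HasSubgraphCopy {V W : Type} (G : SimpleGraph V) (H : SimpleGraph W) : Prop :=
  ∃ f : H →g G, Function.Injective f

/-- `G` contains an induced copy of `H`. -/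
def HasInducedCopy {V W : Type} (G : SimpleGraph V) (H : SimpleGraph W) : Prop :=
  ∃ s : Set V, Nonempty ((G.induce s) ≃g H)

/-- The graph obtained from `G` by subdividing the edge `ab` once (`none` is the new vertex). -/
def edgeSubdiv {V : Type} (G : SimpleGraph V) (a b : V) : SimpleGraph (Option V) :=
  SimpleGraph.fromRel (fun x y =>
    (∃ x' y' : V, x = some x' ∧ y = some y' ∧ G.Adj x' y' ∧
      ¬((x' = a ∧ y' = b) ∨ (x' = b ∧ y' = a))) ∨
    (x = none ∧ (y = some a ∨ y = some b)))

/-- `IsSubdivision H S` : `S` is obtained from `H` by a finite sequence of single edge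
subdivisions (edges of `H` get replaced by possibly longer paths). -/
inductive IsSubdivision : {V : Type} → SimpleGraph V → {W : Type} → SimpleGraph W → Prop
  | refl {V : Type} (G : SimpleGraph V) : IsSubdivision G G
  | step {V W : Type} (G : SimpleGraph V) (H : SimpleGraph W) (a b : W) :
      IsSubdivision G H → H.Adj a b → IsSubdivision G (edgeSubdiv H a b)

/-- `G` contains an induced subdivision of `H`, i.e. some induced subgraph of `G` is
isomorphic to a subdivision of `H`. -/
def HasInducedSubdivision {V W : Type} (G : SimpleGraph V) (H : SimpleGraph W) : Prop :=
  ∃ (U : Type) (S : SimpleGraph U), IsSubdivision H S ∧ HasInducedCopy G S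

/-- The average degree `2e(G)/|V(G)|` of a finite graph. -/
noncomputable def avgDeg {V : Type} (G : SimpleGraph V) [Fintype V] : ℝ :=
  2 * G.edgeSet.ncard / Fintype.card V

/-- `ExtremalBound H ε c` : for every integer `s ≥ 1`, every finite graph on a positive number
`n` of vertices with no `K_{s,s}` subgraph and no induced copy of `H` has at most
`c·s⁴·n^(2-ε)` edges. -/
def ExtremalBound {VH : Type} (H : SimpleGraph VH) (ε c : ℝ) : Prop :=
  ∀ s : ℕ, 1 ≤ s → ∀ (V : Type) [Fintype V], ∀ G : SimpleGraph V,
    0 < Fintype.card V →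
    ¬ HasSubgraphCopy G (completeBipartiteGraph (Fin s) (Fin s)) →
    ¬ HasInducedCopy G H →
    (G.edgeSet.ncard : ℝ) ≤ c * (s : ℝ) ^ 4 * (Fintype.card V : ℝ) ^ ((2 : ℝ) - ε)


section AUX
open Finset

/-- finite Ramsey with binomial bound -/
lemma my_ramsey {V : Type} (G : SimpleGraph V) [DecidableEq V] [DecidableRel G.Adj] :
    ∀ (k q r : ℕ) (S : Finset V), q + r ≤ k → (q + r).choose r ≤ S.card →
      (∃ T ⊆ S, G.IsNClique q T) ∨ (∃ T ⊆ S, Gᶜ.IsNClique r T) := by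
  intro k
  induction k with
  | zero =>
      intro q r S hk _
      have hq : q = 0 := by omega
      subst hq
      exact Or.inl ⟨∅, empty_subset _, by simp [isNClique_empty]⟩
  | succ k ih =>
      intro q r S hk hS
      match q, r with
      | 0, r => exact Or.inl ⟨∅, empty_subset _, by simp [isNClique_empty]⟩
      | q, 0 => exact Or.inr ⟨∅, empty_subset _, by simp [isNClique_empty]⟩
      | q + 1, r + 1 =>
        have hpos : 0 < S.card := lt_of_lt_of_le (Nat.choose_pos (by omega)) hS
        obtain ⟨v, hv⟩ := Finset.card_pos.mp hpos
        set A := (S.erase v).filter (fun u => G.Adj v u) with hA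
        set B := (S.erase v).filter (fun u => ¬ G.Adj v u) with hB
        have hAB : A.card + B.card = S.card - 1 := by
          rw [hA, hB, Finset.card_filter_add_card_filter_not,
            Finset.card_erase_of_mem hv]
        have hpascal : (q + 1 + (r + 1)).choose (r + 1)
            = ((q+1) + r).choose r + (q + (r+1)).choose (r+1) := by
          have : q + 1 + (r + 1) = (q + r + 1) + 1 := by omega
          rw [this, Nat.choose_succ_succ (q + r + 1) r]
          congr 1 <;> congr 1 <;> omega
        have hcase : (q + (r+1)).choose (r+1) ≤ A.card ∨ ((q+1) + r).choose r ≤ B.card := by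
          by_contra hcon
          push_neg at hcon
          omega
        rcases hcase with hc | hc
        · rcases ih q (r+1) A (by omega) hc with ⟨T, hTA, hT⟩ | ⟨T, hTA, hT⟩
          · left
            refine ⟨insert v T, ?_, hT.insert ?_⟩
            · exact Finset.insert_subset hv (hTA.trans ((Finset.filter_subset _ _).trans
                (Finset.erase_subset _ _)))
            · intro b hb
              have := hTA hb
              rw [hA, Finset.mem_filter] at this
              exact this.2
          · exact Or.inr ⟨T, hTA.trans ((Finset.filter_subset _ _).trans (Finset.erase_subset _ _)), hT⟩
        · rcases ih (q+1) r B (by omega) hc with ⟨T, hTB, hT⟩ | ⟨T, hTB, hT⟩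
          · exact Or.inl ⟨T, hTB.trans ((Finset.filter_subset _ _).trans (Finset.erase_subset _ _)), hT⟩
          · right
            refine ⟨insert v T, ?_, hT.insert ?_⟩
            · exact Finset.insert_subset hv (hTB.trans ((Finset.filter_subset _ _).trans
                (Finset.erase_subset _ _)))
            · intro b hb
              have hb' := hTB hb
              rw [hB, Finset.mem_filter] at hb'
              refine ⟨?_, hb'.2⟩
              exact (Finset.ne_of_mem_erase hb'.1).symm

lemma clique_to_Kss {V : Type} (G : SimpleGraph V) (s : ℕ) (T : Finset V)
    (hT : G.IsNClique (2 * s) T) :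
    HasSubgraphCopy G (completeBipartiteGraph (Fin s) (Fin s)) := by
  have hcard : Fintype.card (Fin s ⊕ Fin s) = Fintype.card (↥T) := by
    simp [hT.2, two_mul]
  let e := Fintype.equivOfCardEq hcard
  refine ⟨⟨fun x => (e x : V), ?_⟩, ?_⟩
  · intro a b hab
    have hne : a ≠ b := hab.ne
    have hne' : (e a : V) ≠ (e b : V) := by
      simp only [ne_eq, Subtype.coe_inj, EmbeddingLike.apply_eq_iff_eq]
      exact hne
    exact hT.1 (e a).2 (e b).2 hne'
  · intro a b hab
    have : (e a : V) = (e b : V) := hab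
    exact e.injective (Subtype.coe_injective this)

lemma biclique_to_induced {V : Type} (G : SimpleGraph V) (r t : ℕ) (R T : Finset V)
    (hR : R.card = r) (hT : T.card = t)
    (hdisj : ∀ x ∈ R, x ∉ T)
    (hRind : ∀ x ∈ R, ∀ y ∈ R, ¬ G.Adj x y)
    (hTind : ∀ x ∈ T, ∀ y ∈ T, ¬ G.Adj x y)
    (hRT : ∀ x ∈ R, ∀ y ∈ T, G.Adj x y) :
    HasInducedCopy G (completeBipartiteGraph (Fin r) (Fin t)) := by
  classical
  have hdisjset : Disjoint (↑R : Set V) ↑T := by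
    rw [Set.disjoint_left]
    intro x hx hx'
    exact hdisj x hx hx'
  let e1 : ↥((↑R : Set V) ∪ ↑T) ≃ ↥(↑R : Set V) ⊕ ↥(↑T : Set V) := Equiv.Set.union hdisjset
  let eR : ↥(↑R : Set V) ≃ Fin r := by
    refine (Equiv.subtypeEquivRight ?_).trans (R.equivFinOfCardEq hR)
    intro x; simp
  let eT : ↥(↑T : Set V) ≃ Fin t := by
    refine (Equiv.subtypeEquivRight ?_).trans (T.equivFinOfCardEq hT)
    intro x; simp
  let e : ↥((↑R : Set V) ∪ ↑T) ≃ (Fin r ⊕ Fin t) := e1.trans (Equiv.sumCongr eR eT)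
  refine ⟨(↑R : Set V) ∪ ↑T, ⟨⟨e, ?_⟩⟩⟩
  intro a b
  -- goal : (completeBipartiteGraph _ _).Adj (e a) (e b) ↔ (G.induce _).Adj a b
  have key : ∀ x : ↥((↑R : Set V) ∪ ↑T),
      ((x : V) ∈ R ∧ ∃ i, e x = Sum.inl i) ∨ ((x : V) ∈ T ∧ ∃ j, e x = Sum.inr j) := by
    intro x
    rcases x.2 with hx | hx
    · left
      refine ⟨hx, ⟨eR ⟨x, hx⟩, ?_⟩⟩
      simp only [e, e1, Equiv.trans_apply, Equiv.sumCongr_apply]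
      rw [Equiv.Set.union_apply_left hdisjset hx]
      simp
    · right
      refine ⟨hx, ⟨eT ⟨x, hx⟩, ?_⟩⟩
      simp only [e, e1, Equiv.trans_apply, Equiv.sumCongr_apply]
      rw [Equiv.Set.union_apply_right hdisjset hx]
      simp
  have hadj : ∀ a b : ↥((↑R : Set V) ∪ ↑T),
      ((G.induce _).Adj a b) ↔ G.Adj (a : V) (b : V) := fun a b => Iff.rfl
  rcases key a with ⟨haR, i, hi⟩ | ⟨haT, i, hi⟩ <;> rcases key b with ⟨hbR, j, hj⟩ | ⟨hbT, j, hj⟩ <;>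
    rw [hi, hj, hadj]
  · simpa using hRind _ haR _ hbR
  · simpa using hRT _ haR _ hbT
  · simpa using (hRT _ hbR _ haT).symm
  · simpa using hTind _ haT _ hbT

section
variable {V : Type} [Fintype V] [DecidableEq V] (G : SimpleGraph V) [DecidableRel G.Adj]

lemma cheb_nat (f : V → ℕ) (t : ℕ) (ht : 1 ≤ t) :
    (∑ v, f v)^t ≤ (Fintype.card V)^(t-1) * ∑ v, (f v)^t := by
  obtain ⟨t', rfl⟩ : ∃ t', t = t' + 1 := ⟨t - 1, by omega⟩
  have h := pow_sum_le_card_mul_sum_pow (s := (Finset.univ : Finset V))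
    (f := f) (fun i _ => Nat.zero_le _) t'
  simpa using h

lemma main_count (s r t : ℕ) (hs : 1 ≤ s) (hr : 1 ≤ r) (ht : 1 ≤ t)
    (hcodeg : ∀ T : Finset V, T.card = t → (∀ x ∈ T, ∀ y ∈ T, ¬ G.Adj x y) →
      (Finset.univ.filter (fun v => T ⊆ G.neighborFinset v)).card ≤ (2*s+r).choose r)
    (hindsub : ∀ W : Finset V, ((2*s+t).choose t) ≤ W.card →
      ∃ T ⊆ W, T.card = t ∧ (∀ x ∈ T, ∀ y ∈ T, ¬ G.Adj x y)) :
    (2 * G.edgeFinset.card)^t ≤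
      (3 * t^(2*t) * (((2*s+t).choose t).choose t) * ((2*s+r).choose r))
        * (Fintype.card V)^(2*t-1) := by
  set n := Fintype.card V with hn
  set m := (2*s+r).choose r with hm
  set M := (2*s+t).choose t with hM
  have hm1 : 1 ≤ m := Nat.choose_pos (by omega)
  have hMt : t ≤ M := by
    calc t ≤ (t+2).choose 2 := by
            rw [Nat.choose_two_right]
            calc t = (t * 2) / 2 := by omega
            _ ≤ ((t+2) * (t+1)) / 2 := by
                apply Nat.div_le_div_right
                apply Nat.mul_le_mul <;> omega
    _ = (t+2).choose t := Nat.choose_symm_of_eq_add (by omega)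
    _ ≤ M := Nat.choose_le_choose t (by omega)
  have hCMt1 : 1 ≤ M.choose t := Nat.choose_pos hMt
  set I := (Finset.univ.powersetCard t).filter
      (fun T : Finset V => ∀ x ∈ T, ∀ y ∈ T, ¬ G.Adj x y) with hI
  have hImem : ∀ T ∈ I, T.card = t ∧ (∀ x ∈ T, ∀ y ∈ T, ¬ G.Adj x y) := by
    intro T hT
    rw [hI, Finset.mem_filter, Finset.mem_powersetCard_univ] at hT
    exact hT
  set cnt := fun v : V => (I.filter (fun T => T ⊆ G.neighborFinset v)).card with hcnt
  have hdouble : ∑ v, cnt v = ∑ T ∈ I, (Finset.univ.filter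
      (fun v => T ⊆ G.neighborFinset v)).card := by
    simp only [hcnt, Finset.card_filter]
    rw [Finset.sum_comm]
  have hIcard : I.card ≤ n^t := by
    calc I.card ≤ (Finset.univ.powersetCard t).card := Finset.card_filter_le _ _
    _ = n.choose t := by rw [Finset.card_powersetCard, Finset.card_univ]
    _ ≤ n^t := Nat.choose_le_pow _ _
  have hsumcnt : ∑ v, cnt v ≤ m * n^t := by
    rw [hdouble]
    calc ∑ T ∈ I, (Finset.univ.filter (fun v => T ⊆ G.neighborFinset v)).card
        ≤ ∑ _T ∈ I, m :=
          Finset.sum_le_sum (fun T hT => hcodeg T (hImem T hT).1 (hImem T hT).2)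
    _ = I.card * m := by rw [Finset.sum_const, smul_eq_mul]
    _ ≤ n^t * m := Nat.mul_le_mul_right _ hIcard
    _ = m * n^t := Nat.mul_comm _ _
  have hperv : ∀ v : V, (G.degree v).choose t ≤ M.choose t * (cnt v + 1) := by
    intro v
    rcases le_or_gt (G.degree v) M with hle | hlt
    · calc (G.degree v).choose t ≤ M.choose t := Nat.choose_le_choose t hle
      _ ≤ M.choose t * (cnt v + 1) := Nat.le_mul_of_pos_right _ (by omega)
    · have hdeg : (G.neighborFinset v).card = G.degree v := G.card_neighborFinset_eq_degree v
      have hsub : (G.neighborFinset v).powersetCard M ⊆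
          (I.filter (fun T => T ⊆ G.neighborFinset v)).biUnion
          (fun T => ((G.neighborFinset v).powersetCard M).filter (fun W => T ⊆ W)) := by
        intro W hW
        rw [Finset.mem_powersetCard] at hW
        obtain ⟨T, hTW, hTcard, hTind⟩ := hindsub W (le_of_eq hW.2.symm)
        rw [Finset.mem_biUnion]
        refine ⟨T, ?_, ?_⟩
        · rw [Finset.mem_filter, hI, Finset.mem_filter, Finset.mem_powersetCard_univ]
          exact ⟨⟨hTcard, hTind⟩, hTW.trans hW.1⟩
        · rw [Finset.mem_filter, Finset.mem_powersetCard]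
          exact ⟨⟨hW.1, hW.2⟩, hTW⟩
      have hfiber : ∀ T ∈ I.filter (fun T => T ⊆ G.neighborFinset v),
          (((G.neighborFinset v).powersetCard M).filter (fun W => T ⊆ W)).card
            ≤ (G.degree v - t).choose (M - t) := by
        intro T hT
        rw [Finset.mem_filter] at hT
        have hTcard := (hImem T hT.1).1
        calc (((G.neighborFinset v).powersetCard M).filter (fun W => T ⊆ W)).card
            ≤ ((G.neighborFinset v \ T).powersetCard (M - t)).card := by
              apply Finset.card_le_card_of_injOn (fun W => W \ T)
              · intro W hW
                rw [Finset.mem_coe, Finset.mem_filter, Finset.mem_powersetCard] at hW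
                rw [Finset.mem_coe, Finset.mem_powersetCard]
                refine ⟨Finset.sdiff_subset_sdiff hW.1.1 (le_refl _), ?_⟩
                rw [Finset.card_sdiff_of_subset hW.2, hW.1.2, hTcard]
              · intro W1 hW1 W2 hW2 heq
                rw [Finset.mem_coe, Finset.mem_filter] at hW1 hW2
                rw [← Finset.sdiff_union_of_subset hW1.2,
                  ← Finset.sdiff_union_of_subset hW2.2]
                exact congrArg (· ∪ T) heq
        _ = (G.neighborFinset v \ T).card.choose (M - t) := Finset.card_powersetCard _ _
        _ = (G.degree v - t).choose (M - t) := by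
              rw [Finset.card_sdiff_of_subset hT.2, hTcard, hdeg]
      have hDcount : (G.degree v).choose M ≤ cnt v * (G.degree v - t).choose (M - t) := by
        calc (G.degree v).choose M
            = ((G.neighborFinset v).powersetCard M).card := by
              rw [Finset.card_powersetCard, hdeg]
        _ ≤ ((I.filter (fun T => T ⊆ G.neighborFinset v)).biUnion
              (fun T => ((G.neighborFinset v).powersetCard M).filter (fun W => T ⊆ W))).card :=
              Finset.card_le_card hsub
        _ ≤ ∑ T ∈ I.filter (fun T => T ⊆ G.neighborFinset v),
              (((G.neighborFinset v).powersetCard M).filter (fun W => T ⊆ W)).card :=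
              Finset.card_biUnion_le
        _ ≤ ∑ _T ∈ I.filter (fun T => T ⊆ G.neighborFinset v),
              (G.degree v - t).choose (M - t) := Finset.sum_le_sum hfiber
        _ = cnt v * (G.degree v - t).choose (M - t) := by
              rw [Finset.sum_const, smul_eq_mul, hcnt]
      have hX : 0 < (G.degree v - t).choose (M - t) := Nat.choose_pos (by omega)
      have hident : (G.degree v).choose t * (G.degree v - t).choose (M - t)
          = (G.degree v).choose M * M.choose t := by
        rw [Nat.choose_mul (n := G.degree v) hMt]
      have : (G.degree v).choose t * (G.degree v - t).choose (M - t)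
          ≤ (M.choose t * (cnt v + 1)) * (G.degree v - t).choose (M - t) := by
        rw [hident]
        calc (G.degree v).choose M * M.choose t
            ≤ (cnt v * (G.degree v - t).choose (M - t)) * M.choose t :=
              Nat.mul_le_mul_right _ hDcount
        _ ≤ (M.choose t * (cnt v + 1)) * (G.degree v - t).choose (M - t) := by
              have heq2 : cnt v * (G.degree v - t).choose (M - t) * M.choose t
                  = (M.choose t * cnt v) * (G.degree v - t).choose (M - t) := by ring
              rw [heq2]
              exact Nat.mul_le_mul_right _ (Nat.mul_le_mul_left _ (by omega))
      exact Nat.le_of_mul_le_mul_right this hX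
  -- pointwise power bound
  have hpow : ∀ v : V, (G.degree v)^t ≤ t^(2*t) * ((G.degree v).choose t + 1) := by
    intro v
    set d := G.degree v with hd
    rcases lt_or_ge d t with h | h
    · calc d^t ≤ t^t := Nat.pow_le_pow_left (by omega) t
      _ ≤ t^(2*t) := Nat.pow_le_pow_right (by omega) (by omega)
      _ ≤ t^(2*t) * ((d.choose t) + 1) := Nat.le_mul_of_pos_right _ (by omega)
    · have h1 : d ≤ t * (d + 1 - t) := by
        have h2 : d + 1 - t = d - t + 1 := by omega
        rw [h2, Nat.mul_add, Nat.mul_one]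
        have h3 : d - t ≤ t * (d - t) := Nat.le_mul_of_pos_left _ (by omega)
        omega
      calc d^t ≤ (t * (d + 1 - t))^t := Nat.pow_le_pow_left h1 t
      _ = t^t * (d + 1 - t)^t := Nat.mul_pow _ _ _
      _ ≤ t^t * d.descFactorial t := Nat.mul_le_mul_left _ (Nat.pow_sub_le_descFactorial d t)
      _ = t^t * (t.factorial * d.choose t) := by rw [Nat.descFactorial_eq_factorial_mul_choose]
      _ ≤ t^t * (t^t * d.choose t) :=
          Nat.mul_le_mul_left _ (Nat.mul_le_mul_right _ (Nat.factorial_le_pow t))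
      _ = t^(2*t) * d.choose t := by rw [← Nat.mul_assoc, ← Nat.pow_add, two_mul]
      _ ≤ t^(2*t) * (d.choose t + 1) := Nat.mul_le_mul_left _ (by omega)
  -- combine
  have hnle : n ≤ n^t := Nat.le_self_pow (by omega) n
  have hsumpow : ∑ v, (G.degree v)^t ≤ t^(2*t) * (3 * (M.choose t) * m * n^t) := by
    calc ∑ v, (G.degree v)^t ≤ ∑ v, t^(2*t) * ((G.degree v).choose t + 1) :=
          Finset.sum_le_sum (fun v _ => hpow v)
    _ = t^(2*t) * (∑ v, ((G.degree v).choose t + 1)) := by rw [Finset.mul_sum]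
    _ = t^(2*t) * ((∑ v, (G.degree v).choose t) + n) := by
          rw [Finset.sum_add_distrib, Finset.sum_const, Finset.card_univ, smul_eq_mul, mul_one]
    _ ≤ t^(2*t) * ((∑ v, M.choose t * (cnt v + 1)) + n) := by
          apply Nat.mul_le_mul_left
          apply Nat.add_le_add_right
          exact Finset.sum_le_sum (fun v _ => hperv v)
    _ = t^(2*t) * (M.choose t * ((∑ v, cnt v) + n) + n) := by
          rw [← Finset.mul_sum, Finset.sum_add_distrib, Finset.sum_const, Finset.card_univ,
            smul_eq_mul, mul_one]
    _ ≤ t^(2*t) * (M.choose t * (m * n^t + n^t) + n^t) := by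
          apply Nat.mul_le_mul_left
          apply Nat.add_le_add _ hnle
          apply Nat.mul_le_mul_left
          exact Nat.add_le_add hsumcnt hnle
    _ ≤ t^(2*t) * (3 * (M.choose t) * m * n^t) := by
          apply Nat.mul_le_mul_left
          have h1 : n^t ≤ M.choose t * (m * n^t) := by
            calc n^t = 1 * n^t := (Nat.one_mul _).symm
            _ ≤ M.choose t * (m * n^t) := by
                apply Nat.mul_le_mul hCMt1
                exact Nat.le_mul_of_pos_left _ (by omega)
          calc M.choose t * (m * n^t + n^t) + n^t
              ≤ M.choose t * (m * n^t + m * n^t) + M.choose t * (m * n^t) := by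
                apply Nat.add_le_add _ h1
                apply Nat.mul_le_mul_left
                apply Nat.add_le_add_left
                exact Nat.le_mul_of_pos_left _ (by omega)
          _ = 3 * (M.choose t) * m * n^t := by ring
  have hhand : ∑ v, G.degree v = 2 * G.edgeFinset.card := G.sum_degrees_eq_twice_card_edges
  calc (2 * G.edgeFinset.card)^t = (∑ v, G.degree v)^t := by rw [hhand]
  _ ≤ n^(t-1) * ∑ v, (G.degree v)^t := cheb_nat _ t ht
  _ ≤ n^(t-1) * (t^(2*t) * (3 * (M.choose t) * m * n^t)) := Nat.mul_le_mul_left _ hsumpow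
  _ = (3 * t^(2*t) * (M.choose t) * m) * (n^(t-1) * n^t) := by ring
  _ = (3 * t^(2*t) * (M.choose t) * m) * n^(2*t-1) := by
      rw [← Nat.pow_add]
      have : t - 1 + t = 2*t - 1 := by omega
      rw [this]
end
lemma compl_clique_indep {V : Type} (G : SimpleGraph V) (T : Finset V) (k : ℕ)
    (hT : Gᶜ.IsNClique k T) : ∀ x ∈ T, ∀ y ∈ T, ¬ G.Adj x y := by
  intro x hx y hy hxy
  rcases eq_or_ne x y with rfl | hne
  · exact G.irrefl hxy
  · have h := hT.1 hx hy hne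
    rw [SimpleGraph.compl_adj] at h
    exact h.2 hxy

lemma count_glue {V : Type} [Fintype V] (G : SimpleGraph V) (s r t : ℕ)
    (hs : 1 ≤ s) (hr : 1 ≤ r) (ht : 1 ≤ t)
    (hKss : ¬ HasSubgraphCopy G (completeBipartiteGraph (Fin s) (Fin s)))
    (hind : ¬ HasInducedCopy G (completeBipartiteGraph (Fin r) (Fin t))) :
    (2 * G.edgeSet.ncard)^t ≤
      (3 * t^(2*t) * (((2*s+t).choose t).choose t) * ((2*s+r).choose r))
        * (Fintype.card V)^(2*t-1) := by
  classical
  have hclique : ∀ T : Finset V, ¬ G.IsNClique (2*s) T :=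
    fun T hT => hKss (clique_to_Kss G s T hT)
  have hindsub : ∀ W : Finset V, ((2*s+t).choose t) ≤ W.card →
      ∃ T ⊆ W, T.card = t ∧ (∀ x ∈ T, ∀ y ∈ T, ¬ G.Adj x y) := by
    intro W hW
    rcases my_ramsey G (2*s+t) (2*s) t W le_rfl hW with ⟨T, hTW, hT⟩ | ⟨T, hTW, hT⟩
    · exact absurd hT (hclique T)
    · exact ⟨T, hTW, hT.2, compl_clique_indep G T t hT⟩
  have hcodeg : ∀ T : Finset V, T.card = t → (∀ x ∈ T, ∀ y ∈ T, ¬ G.Adj x y) →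
      (Finset.univ.filter (fun v => T ⊆ G.neighborFinset v)).card ≤ (2*s+r).choose r := by
    intro T hTcard hTind
    by_contra hcon
    push_neg at hcon
    rcases my_ramsey G (2*s+r) (2*s) r
        (Finset.univ.filter (fun v => T ⊆ G.neighborFinset v)) le_rfl (le_of_lt hcon) with
      ⟨R, _, hR⟩ | ⟨R, hRS, hR⟩
    · exact hclique R hR
    · apply hind
      have hRmem : ∀ x ∈ R, T ⊆ G.neighborFinset x := by
        intro x hx
        have := hRS hx
        rw [Finset.mem_filter] at this
        exact this.2
      refine biclique_to_induced G r t R T hR.2 hTcard ?_ (compl_clique_indep G R r hR) hTind ?_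
      · intro x hxR hxT
        have := hRmem x hxR hxT
        rw [SimpleGraph.mem_neighborFinset] at this
        exact G.irrefl this
      · intro x hxR y hyT
        have := hRmem x hxR hyT
        rw [SimpleGraph.mem_neighborFinset] at this
        exact this
  have hE : G.edgeSet.ncard = G.edgeFinset.card := by
    simp [Set.ncard_eq_toFinset_card', SimpleGraph.edgeFinset]
  rw [hE]
  exact main_count G s r t hs hr ht hcodeg hindsub
lemma K_bound (s r t : ℕ) (hs : 1 ≤ s) (hr : 1 ≤ r) (ht : 1 ≤ t) :
    3 * t^(2*t) * (((2*s+t).choose t).choose t) * ((2*s+r).choose r)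
      ≤ (3 * t^(2*t) * (t+2)^(t*t) * (r+2)^r) * s^(t*t+r) := by
  have h1 : ((2*s+t).choose t).choose t ≤ (t+2)^(t*t) * s^(t*t) := by
    calc ((2*s+t).choose t).choose t ≤ ((2*s+t).choose t)^t := Nat.choose_le_pow _ _
    _ ≤ ((2*s+t)^t)^t := Nat.pow_le_pow_left (Nat.choose_le_pow _ _) t
    _ = (2*s+t)^(t*t) := by rw [← pow_mul]
    _ ≤ ((t+2)*s)^(t*t) := Nat.pow_le_pow_left (by nlinarith) _
    _ = (t+2)^(t*t) * s^(t*t) := mul_pow _ _ _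
  have h2 : (2*s+r).choose r ≤ (r+2)^r * s^r := by
    calc (2*s+r).choose r ≤ (2*s+r)^r := Nat.choose_le_pow _ _
    _ ≤ ((r+2)*s)^r := Nat.pow_le_pow_left (by nlinarith) _
    _ = (r+2)^r * s^r := mul_pow _ _ _
  calc 3 * t^(2*t) * (((2*s+t).choose t).choose t) * ((2*s+r).choose r)
      ≤ 3 * t^(2*t) * ((t+2)^(t*t) * s^(t*t)) * ((r+2)^r * s^r) :=
        Nat.mul_le_mul (Nat.mul_le_mul_left _ h1) h2
  _ = (3 * t^(2*t) * (t+2)^(t*t) * (r+2)^r) * s^(t*t+r) := by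
        rw [pow_add]; ring

set_option maxHeartbeats 1000000 in
/-- For all integers `r, t ≥ 2` there are constants `0 < ε ≤ 1/2` and
`c > 1` such that for every `s ≥ 1`, every `n`-vertex graph with no `K_{s,s}` subgraph and
no induced copy of `K_{r,t}` has at most `c·s⁴·n^(2-ε)` edges. -/
theorem stmt_4 (r t : ℕ) (hr : 2 ≤ r) (ht : 2 ≤ t) :
    ∃ ε c : ℝ, 0 < ε ∧ ε ≤ 1 / 2 ∧ 1 < c ∧
      ExtremalBound (completeBipartiteGraph (Fin r) (Fin t)) ε c := by
  have htt : 4 ≤ t*t := by nlinarith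
  set q : ℕ := t*t + r with hq
  have hq6 : 6 ≤ q := by omega
  set P : ℕ := 4*t*q with hP
  set c₀ : ℕ := 3 * t^(2*t) * (t+2)^(t*t) * (r+2)^r with hc₀
  have ht0 : 0 < t := by omega
  have hc₀pos : 0 < c₀ := by positivity
  have htqR : (0:ℝ) < (t:ℝ)*(q:ℝ) := by
    have : (0:ℝ) < (t:ℝ) := by exact_mod_cast ht0
    have hq0 : (0:ℝ) < (q:ℝ) := by exact_mod_cast (by omega : 0 < q)
    positivity
  set ε : ℝ := 1 / ((t:ℝ)*(q:ℝ)) with hε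
  clear_value ε
  refine ⟨ε, (c₀:ℝ) + 2, by rw [hε]; exact div_pos one_pos htqR, ?_, ?_, ?_⟩
  · rw [hε, div_le_div_iff₀ htqR (by norm_num)]
    have h1 : (12:ℝ) ≤ (t:ℝ)*(q:ℝ) := by
      have : (12:ℕ) ≤ t*q := by nlinarith
      exact_mod_cast this
    linarith
  · have : (0:ℝ) ≤ (c₀:ℝ) := Nat.cast_nonneg _
    linarith
  · intro s hs V instV G hn hKss hind
    classical
    have key := count_glue G s r t hs (by omega) (by omega) hKss hind
    have hKb := K_bound s r t hs (by omega) (by omega)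
    set n := Fintype.card V with hn'
    set E := G.edgeSet.ncard with hE
    clear_value n E
    have keyn : (2*E)^t ≤ (c₀ * s^q) * n^(2*t-1) :=
      le_trans key (Nat.mul_le_mul_right _ hKb)
    have hn1 : 1 ≤ n := hn
    have hnR : (1:ℝ) ≤ (n:ℝ) := by exact_mod_cast hn1
    have hnR0 : (0:ℝ) < (n:ℝ) := by linarith
    have hsR : (1:ℝ) ≤ (s:ℝ) := by exact_mod_cast hs
    have hsR0 : (0:ℝ) ≤ (s:ℝ) := by linarith
    have hεpos : 0 < ε := by rw [hε]; exact div_pos one_pos htqR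
    have hc₀R : (1:ℝ) ≤ (c₀:ℝ) := by exact_mod_cast hc₀pos
    rcases le_or_gt n (s^P) with hcase | hcase
    · -- few vertices: trivial bound
      have hEn : E ≤ n^2 := by
        have h2 : E = G.edgeFinset.card := by
          simp [hE, Set.ncard_eq_toFinset_card', SimpleGraph.edgeFinset]
        calc E = G.edgeFinset.card := h2
        _ ≤ (Fintype.card V).choose 2 := G.card_edgeFinset_le_card_choose_two
        _ = n.choose 2 := by rw [hn']
        _ ≤ n^2 := Nat.choose_le_pow _ _
      have hmain : (n:ℝ)^ε ≤ (s:ℝ)^4 := by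
        have h3 : (n:ℝ) ≤ ((s:ℝ))^(P:ℕ) := by exact_mod_cast hcase
        calc (n:ℝ)^ε ≤ (((s:ℝ))^(P:ℕ))^ε :=
              Real.rpow_le_rpow (le_of_lt hnR0) h3 (le_of_lt hεpos)
        _ = (s:ℝ)^((P:ℝ)*ε) := by
              rw [← Real.rpow_natCast (s:ℝ) P, ← Real.rpow_mul hsR0]
        _ = (s:ℝ)^((4:ℝ)) := by
              congr 1
              rw [hε, hP]
              push_cast
              field_simp
        _ = (s:ℝ)^(4:ℕ) := by
              rw [← Real.rpow_natCast (s:ℝ) 4]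
              norm_num
      have hx1 : (0:ℝ) ≤ (s:ℝ)^4 := by positivity
      have hx2 : (0:ℝ) ≤ (n:ℝ)^((2:ℝ)-ε) := Real.rpow_nonneg (le_of_lt hnR0) _
      calc (E:ℝ) ≤ ((n:ℝ))^(2:ℕ) := by exact_mod_cast hEn
      _ = (n:ℝ)^((2:ℝ)) := by rw [← Real.rpow_natCast (n:ℝ) 2]; norm_num
      _ = (n:ℝ)^((2:ℝ)-ε) * (n:ℝ)^ε := by
            rw [← Real.rpow_add hnR0]; ring_nf
      _ ≤ (n:ℝ)^((2:ℝ)-ε) * (s:ℝ)^4 := by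
            exact mul_le_mul_of_nonneg_left hmain hx2
      _ ≤ ((c₀:ℝ) + 2) * (s:ℝ)^4 * (n:ℝ)^((2:ℝ)-ε) := by
            nlinarith [mul_nonneg hx1 hx2]
    · -- many vertices
      have hPn : ((s:ℝ))^(P:ℕ) ≤ (n:ℝ) := by exact_mod_cast (le_of_lt hcase)
      set K : ℕ := c₀ * s^q with hK
      have hK1 : 0 < K := by
        have hs0 : 0 < s := hs
        positivity
      clear_value K
      have hKR1 : (1:ℝ) ≤ (K:ℝ) := by exact_mod_cast hK1
      have base : ((2*E : ℕ):ℝ)^t ≤ (K:ℝ) * ((n:ℝ))^((2*t-1 : ℕ)) := by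
        exact_mod_cast keyn
      have hcast1 : (((2*t-1 : ℕ)):ℝ) = 2*(t:ℝ) - 1 := by
        have : 1 ≤ 2*t := by omega
        push_cast [this]
        ring
      have htR0 : (0:ℝ) < (t:ℝ) := by exact_mod_cast ht0
      -- B := K * n^(2 - 1/t)
      have hBt : ((K:ℝ) * (n:ℝ)^((2:ℝ) - 1/(t:ℝ)))^t
          = (K:ℝ)^t * (n:ℝ)^((2*(t:ℝ) - 1)) := by
        rw [mul_pow, ← Real.rpow_natCast ((n:ℝ)^((2:ℝ) - 1/(t:ℝ))) t,
          ← Real.rpow_mul (le_of_lt hnR0)]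
        congr 2
        field_simp
        try ring
      have h2E : (2*(E:ℝ)) ≤ (K:ℝ) * (n:ℝ)^((2:ℝ) - 1/(t:ℝ)) := by
        have hBnn : (0:ℝ) ≤ (K:ℝ) * (n:ℝ)^((2:ℝ) - 1/(t:ℝ)) := by
          apply mul_nonneg (by linarith) (Real.rpow_nonneg (le_of_lt hnR0) _)
        rw [← pow_le_pow_iff_left₀ (by positivity : (0:ℝ) ≤ 2*(E:ℝ)) hBnn (by omega : t ≠ 0)]
        calc (2*(E:ℝ))^t = ((2*E : ℕ):ℝ)^t := by push_cast; ring
        _ ≤ (K:ℝ) * ((n:ℝ))^((2*t-1 : ℕ)) := base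
        _ = (K:ℝ) * (n:ℝ)^((2*(t:ℝ) - 1)) := by
              rw [← Real.rpow_natCast (n:ℝ) (2*t-1), hcast1]
        _ ≤ (K:ℝ)^t * (n:ℝ)^((2*(t:ℝ) - 1)) := by
              apply mul_le_mul_of_nonneg_right _ (Real.rpow_nonneg (le_of_lt hnR0) _)
              exact le_self_pow₀ hKR1 (by omega)
        _ = ((K:ℝ) * (n:ℝ)^((2:ℝ) - 1/(t:ℝ)))^t := hBt.symm
      -- bound K by c₀ * s^4 * n^((q-4)/P)
      have hsq : (K:ℝ) ≤ (c₀:ℝ) * (s:ℝ)^4 * (n:ℝ)^(((q-4:ℕ):ℝ)/(P:ℝ)) := by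
        have hsplit : (K:ℝ) = (c₀:ℝ) * (s:ℝ)^4 * (s:ℝ)^((q-4:ℕ)) := by
          rw [hK]
          push_cast
          rw [mul_assoc, pow_mul_pow_sub (s:ℝ) (by omega : 4 ≤ q)]
        rw [hsplit]
        apply mul_le_mul_of_nonneg_left _ (by positivity)
        have hPR0 : (0:ℝ) < (P:ℝ) := by
          exact_mod_cast (by positivity : 0 < P)
        calc (s:ℝ)^((q-4:ℕ)) = ((s:ℝ)^(P:ℕ))^(((q-4:ℕ):ℝ)/(P:ℝ)) := by
              rw [← Real.rpow_natCast (s:ℝ) P, ← Real.rpow_mul hsR0,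
                ← Real.rpow_natCast (s:ℝ) (q-4)]
              congr 1
              field_simp
        _ ≤ (n:ℝ)^(((q-4:ℕ):ℝ)/(P:ℝ)) :=
              Real.rpow_le_rpow (by positivity) hPn (by positivity)
      -- exponent arithmetic
      have hqcast : ((q-4:ℕ):ℝ) = (q:ℝ) - 4 := by
        have : 4 ≤ q := by omega
        push_cast [this]
        ring
      have hqR : (6:ℝ) ≤ (q:ℝ) := by exact_mod_cast hq6
      have htR : (2:ℝ) ≤ (t:ℝ) := by exact_mod_cast ht
      have hPR : (P:ℝ) = 4*(t:ℝ)*(q:ℝ) := by rw [hP]; push_cast; ring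
      have hQ0 : (0:ℝ) < (q:ℝ) := by linarith
      have hT0 : (0:ℝ) < (t:ℝ) := by linarith
      have hexp : ((q-4:ℕ):ℝ)/(P:ℝ) + ((2:ℝ) - 1/(t:ℝ)) ≤ (2:ℝ) - ε := by
        rw [hqcast, hPR, hε]
        have hTQ0 : (0:ℝ) < (t:ℝ)*(q:ℝ) := mul_pos hT0 hQ0
        have h2 : 1/(t:ℝ) - 1/((t:ℝ)*(q:ℝ)) = ((q:ℝ)-1)/((t:ℝ)*(q:ℝ)) := by
          field_simp
          try ring
        have e1 : ((q:ℝ)-4)/(4*(t:ℝ)*(q:ℝ)) ≤ 1/(t:ℝ) - 1/((t:ℝ)*(q:ℝ)) := by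
          rw [h2, div_le_div_iff₀ (mul_pos (mul_pos (by norm_num : (0:ℝ) < 4) hT0) hQ0) hTQ0]
          nlinarith [mul_nonneg (by linarith : (0:ℝ) ≤ 3*(q:ℝ)) (le_of_lt hTQ0)]
        linarith
      have hrpE : (0:ℝ) ≤ (n:ℝ)^((2:ℝ) - 1/(t:ℝ)) := Real.rpow_nonneg (le_of_lt hnR0) _
      calc (E:ℝ) ≤ 2*(E:ℝ) := by
            have : (0:ℝ) ≤ (E:ℝ) := Nat.cast_nonneg _
            linarith
      _ ≤ (K:ℝ) * (n:ℝ)^((2:ℝ) - 1/(t:ℝ)) := h2E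
      _ ≤ ((c₀:ℝ) * (s:ℝ)^4 * (n:ℝ)^(((q-4:ℕ):ℝ)/(P:ℝ))) * (n:ℝ)^((2:ℝ) - 1/(t:ℝ)) :=
            mul_le_mul_of_nonneg_right hsq hrpE
      _ = (c₀:ℝ) * (s:ℝ)^4 * ((n:ℝ)^(((q-4:ℕ):ℝ)/(P:ℝ)) * (n:ℝ)^((2:ℝ) - 1/(t:ℝ))) := by
            ring
      _ = (c₀:ℝ) * (s:ℝ)^4 * (n:ℝ)^(((q-4:ℕ):ℝ)/(P:ℝ) + ((2:ℝ) - 1/(t:ℝ))) := by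
            rw [← Real.rpow_add hnR0]
      _ ≤ (c₀:ℝ) * (s:ℝ)^4 * (n:ℝ)^((2:ℝ) - ε) := by
            apply mul_le_mul_of_nonneg_left
              (Real.rpow_le_rpow_of_exponent_le hnR hexp) (by positivity)
      _ ≤ ((c₀:ℝ) + 2) * (s:ℝ)^4 * (n:ℝ)^((2:ℝ) - ε) := by
            have hx1 : (0:ℝ) ≤ (s:ℝ)^4 := by positivity
            have hx2 : (0:ℝ) ≤ (n:ℝ)^((2:ℝ)-ε) := Real.rpow_nonneg (le_of_lt hnR0) _
            nlinarith [mul_nonneg hx1 hx2]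

end AUX
end

section
/- For every positive integer n and every graph J on n vertices, every proper subdivision of the complete graph K_n contains an induced subdivision of J, i.e., some induced subgraph of the proper subdivision of K_n is isomorphic to a subdivision of J. -/
open SimpleGraph

/-- The 1-subdivision of a graph: every edge is subdivided exactly once. -/
def oneSubdiv {V : Type} (G : SimpleGraph V) : SimpleGraph (V ⊕ G.edgeSet) :=
  SimpleGraph.fromRel (fun x y => ∃ (v : V) (e : G.edgeSet),
    x = Sum.inl v ∧ y = Sum.inr e ∧ v ∈ (e : Sym2 V))

/-- The number of edges of `G` with one endpoint in `A` and the other in `B`. -/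
noncomputable def crossEdges {V : Type} (G : SimpleGraph V) (A B : Set V) : ℕ :=
  {e : Sym2 V | e ∈ G.edgeSet ∧ ∃ a ∈ A, ∃ b ∈ B, e = s(a, b)}.ncard

/-- `G` is `d`-degenerate: every nonempty (induced) subgraph has a vertex of degree at most `d`. -/
def Degenerate {V : Type} (G : SimpleGraph V) (d : ℝ) : Prop :=
  ∀ s : Set V, s.Nonempty → ∃ v ∈ s, ((G.neighborSet v ∩ s).ncard : ℝ) ≤ d

/-- The maximum average degree of `G`: the maximum of the average degree over all induced
subgraphs of `G`. -/
noncomputable def maxAvgDeg {V : Type} (G : SimpleGraph V) [Fintype V] : ℝ :=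
  ⨆ t : Finset V, avgDeg (G.induce (t : Set V))

/-- A proper subdivision of `H` is a subdivision in which every edge of `H` is subdivided
at least once; equivalently, a subdivision of the 1-subdivision of `H`. -/
def IsProperSubdivision {V W : Type} (H : SimpleGraph V) (S : SimpleGraph W) : Prop :=
  IsSubdivision (oneSubdiv H) S

lemma edgeSubdiv_adj_some_some {V : Type} (G : SimpleGraph V) (a b x y : V) :
    (edgeSubdiv G a b).Adj (some x) (some y) ↔
      G.Adj x y ∧ ¬((x = a ∧ y = b) ∨ (x = b ∧ y = a)) := by
  simp only [edgeSubdiv, SimpleGraph.fromRel_adj]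
  constructor
  · rintro ⟨hne, h | h⟩
    · rcases h with ⟨x',y',hx,hy,hadj,hc⟩ | ⟨h,_⟩
      · cases hx; cases hy; exact ⟨hadj, hc⟩
      · simp at h
    · rcases h with ⟨x',y',hx,hy,hadj,hc⟩ | ⟨h,_⟩
      · cases hx; cases hy; exact ⟨hadj.symm, fun hh => hc (hh.symm.imp And.symm And.symm)⟩
      · simp at h
  · rintro ⟨hadj, hc⟩
    exact ⟨by simpa using hadj.ne, Or.inl (Or.inl ⟨x, y, rfl, rfl, hadj, hc⟩)⟩

lemma edgeSubdiv_adj_none_some {V : Type} (G : SimpleGraph V) (a b y : V) :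
    (edgeSubdiv G a b).Adj none (some y) ↔ (y = a ∨ y = b) := by
  simp only [edgeSubdiv, SimpleGraph.fromRel_adj]
  constructor
  · rintro ⟨hne, h | h⟩
    · rcases h with ⟨x',y',hx,_⟩ | ⟨_, h⟩
      · simp at hx
      · rcases h with h | h <;> simp at h <;> simp [h]
    · rcases h with ⟨x',y',_,hy,_⟩ | ⟨h,_⟩
      · simp at hy
      · simp at h
  · rintro (rfl | rfl) <;> exact ⟨by simp, Or.inl (Or.inr (by simp))⟩

lemma edgeSubdiv_adj_none_none {V : Type} (G : SimpleGraph V) (a b : V) :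
    ¬ (edgeSubdiv G a b).Adj none none := fun h => h.ne rfl

lemma edgeSubdiv_adj_some_none {V : Type} (G : SimpleGraph V) (a b x : V) :
    (edgeSubdiv G a b).Adj (some x) none ↔ (x = a ∨ x = b) := by
  rw [SimpleGraph.adj_comm]; exact edgeSubdiv_adj_none_some G a b x

/-- Lift a graph isomorphism to the edge subdivisions. -/

noncomputable def edgeSubdivIso {V W : Type} {G : SimpleGraph V} {G' : SimpleGraph W}
    (e : G ≃g G') (a b : V) : edgeSubdiv G a b ≃g edgeSubdiv G' (e a) (e b) where
  toEquiv := Equiv.optionCongr e.toEquiv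
  map_rel_iff' := by
    rintro (_ | x) (_ | y)
    · simp [edgeSubdiv_adj_none_none]
    · simp only [Equiv.optionCongr_apply, Option.map_none, Option.map_some]
      rw [edgeSubdiv_adj_none_some, edgeSubdiv_adj_none_some]
      simp [e.toEquiv.apply_eq_iff_eq]
    · simp only [Equiv.optionCongr_apply, Option.map_none, Option.map_some]
      rw [edgeSubdiv_adj_some_none, edgeSubdiv_adj_some_none]
      simp [e.toEquiv.apply_eq_iff_eq]
    · simp only [Equiv.optionCongr_apply, Option.map_some]
      rw [edgeSubdiv_adj_some_some, edgeSubdiv_adj_some_some]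
      simp [e.map_adj_iff, e.toEquiv.apply_eq_iff_eq]

lemma hasInducedSubdivision_edgeSubdiv {X W : Type} {J : SimpleGraph X} {G : SimpleGraph W}
    (h : HasInducedSubdivision G J) {a b : W} (hab : G.Adj a b) :
    HasInducedSubdivision (edgeSubdiv G a b) J := by
  obtain ⟨U, T, hT, s, ⟨iso⟩⟩ := h
  by_cases hmem : a ∈ s ∧ b ∈ s
  · obtain ⟨ha, hb⟩ := hmem
    set A := iso ⟨a, ha⟩ with hA
    set B := iso ⟨b, hb⟩ with hB
    have hAB : T.Adj A B := by
      rw [hA, hB, iso.map_adj_iff]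
      simpa using hab
    refine ⟨Option U, edgeSubdiv T A B, IsSubdivision.step _ _ _ _ hT hAB,
      insert none (some '' s), ⟨?_⟩⟩
    have memw : ∀ {w : W}, (some w : Option W) ∈ insert none (some '' s) → w ∈ s := by
      intro w hw
      simpa using hw
    refine ⟨⟨fun x => match x with
      | ⟨none, _⟩ => none
      | ⟨some w, hw⟩ => some (iso ⟨w, memw hw⟩),
      fun o => match o with
      | none => ⟨none, Set.mem_insert _ _⟩
      | some u => ⟨some (iso.symm u).val, Set.mem_insert_of_mem _ ⟨_, (iso.symm u).prop, rfl⟩⟩,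
      ?_, ?_⟩, ?_⟩
    · rintro ⟨(_ | w), hw⟩
      · rfl
      · apply Subtype.ext
        simp
    · rintro (_ | u)
      · rfl
      · show some (iso ⟨(iso.symm u).val, _⟩) = some u
        congr 1
        rw [show (⟨(iso.symm u).val, _⟩ : {x // x ∈ s}) = iso.symm u from Subtype.ext rfl]
        exact iso.apply_symm_apply u
    · rintro ⟨(_ | x), hx⟩ ⟨(_ | y), hy⟩
      · simpa using (edgeSubdiv_adj_none_none G a b)
      · show (edgeSubdiv T A B).Adj none (some _) ↔ _
        rw [edgeSubdiv_adj_none_some]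
        show _ ↔ (edgeSubdiv G a b).Adj none (some y)
        rw [edgeSubdiv_adj_none_some]
        simp [hA, hB, iso.injective.eq_iff, Subtype.ext_iff]
      · show (edgeSubdiv T A B).Adj (some _) none ↔ _
        rw [edgeSubdiv_adj_some_none]
        show _ ↔ (edgeSubdiv G a b).Adj (some x) none
        rw [edgeSubdiv_adj_some_none]
        simp [hA, hB, iso.injective.eq_iff, Subtype.ext_iff]
      · show (edgeSubdiv T A B).Adj (some _) (some _) ↔ _
        rw [edgeSubdiv_adj_some_some]
        show _ ↔ (edgeSubdiv G a b).Adj (some x) (some y)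
        rw [edgeSubdiv_adj_some_some]
        rw [hA, hB]
        rw [show T.Adj (iso ⟨x, memw hx⟩) (iso ⟨y, memw hy⟩) ↔ G.Adj x y by
          rw [iso.map_adj_iff]; simp]
        simp [iso.injective.eq_iff, Subtype.ext_iff]
  · refine ⟨U, T, hT, some '' s, ⟨?_⟩⟩
    have memw : ∀ {w : W}, (some w : Option W) ∈ some '' s → w ∈ s := by
      intro w hw; simpa using hw
    refine ⟨⟨fun x => match x with
      | ⟨some w, hw⟩ => iso ⟨w, memw hw⟩
      | ⟨none, hw⟩ => absurd hw (by simp),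
      fun u => ⟨some (iso.symm u).val, ⟨_, (iso.symm u).prop, rfl⟩⟩, ?_, ?_⟩, ?_⟩
    · rintro ⟨(_ | w), hw⟩
      · exact absurd hw (by simp)
      · apply Subtype.ext
        simp
    · intro u
      show iso ⟨(iso.symm u).val, _⟩ = u
      rw [show (⟨(iso.symm u).val, _⟩ : {x // x ∈ s}) = iso.symm u from Subtype.ext rfl]
      exact iso.apply_symm_apply u
    · rintro ⟨(_ | x), hx⟩ ⟨(_ | y), hy⟩
      · exact absurd hx (by simp)
      · exact absurd hx (by simp)
      · exact absurd hy (by simp)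
      · show T.Adj (iso ⟨x, memw hx⟩) (iso ⟨y, memw hy⟩) ↔ _
        rw [iso.map_adj_iff]
        show _ ↔ (edgeSubdiv G a b).Adj (some x) (some y)
        rw [edgeSubdiv_adj_some_some]
        have hx' := memw hx
        have hy' := memw hy
        have : ¬((x = a ∧ y = b) ∨ (x = b ∧ y = a)) := by
          rintro (⟨rfl, rfl⟩ | ⟨rfl, rfl⟩) <;> exact hmem ⟨by assumption, by assumption⟩
        simp [this]

lemma oneSubdiv_adj_inl_inl {V : Type} (G : SimpleGraph V) (u v : V) :
    ¬ (oneSubdiv G).Adj (Sum.inl u) (Sum.inl v) := by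
  simp only [oneSubdiv, SimpleGraph.fromRel_adj]
  rintro ⟨hne, ⟨v', e', h1, h2, h3⟩ | ⟨v', e', h1, h2, h3⟩⟩ <;> simp at h2

lemma oneSubdiv_adj_inl_inr {V : Type} (G : SimpleGraph V) (u : V) (e : G.edgeSet) :
    (oneSubdiv G).Adj (Sum.inl u) (Sum.inr e) ↔ u ∈ (e : Sym2 V) := by
  simp only [oneSubdiv, SimpleGraph.fromRel_adj]
  constructor
  · rintro ⟨hne, ⟨v', e', h1, h2, h3⟩ | ⟨v', e', h1, h2, h3⟩⟩
    · cases h1; cases h2; exact h3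
    · simp at h1
  · intro h
    exact ⟨by simp, Or.inl ⟨u, e, rfl, rfl, h⟩⟩

lemma oneSubdiv_adj_inr_inr {V : Type} (G : SimpleGraph V) (e f : G.edgeSet) :
    ¬ (oneSubdiv G).Adj (Sum.inr e) (Sum.inr f) := by
  simp only [oneSubdiv, SimpleGraph.fromRel_adj]
  rintro ⟨hne, ⟨v', e', h1, h2, h3⟩ | ⟨v', e', h1, h2, h3⟩⟩ <;> simp at h1

lemma oneSubdiv_adj_inr_inl {V : Type} (G : SimpleGraph V) (u : V) (e : G.edgeSet) :
    (oneSubdiv G).Adj (Sum.inr e) (Sum.inl u) ↔ u ∈ (e : Sym2 V) := by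
  rw [SimpleGraph.adj_comm]; exact oneSubdiv_adj_inl_inr G u e

/-- The partial subdivision of `H` where exactly the edges in `F` are subdivided once. -/

def partSubdiv {V : Type} (H : SimpleGraph V) (F : Set (Sym2 V)) :
    SimpleGraph (V ⊕ {e : Sym2 V // e ∈ H.edgeSet ∩ F}) :=
  SimpleGraph.fromRel (fun x y =>
    (∃ u v, x = Sum.inl u ∧ y = Sum.inl v ∧ H.Adj u v ∧ s(u,v) ∉ F) ∨
    (∃ u e, x = Sum.inl u ∧ y = Sum.inr e ∧ u ∈ (e : Sym2 V)))

lemma partSubdiv_adj_inl_inl {V : Type} (H : SimpleGraph V) (F : Set (Sym2 V)) (u v : V) :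
    (partSubdiv H F).Adj (Sum.inl u) (Sum.inl v) ↔ H.Adj u v ∧ s(u,v) ∉ F := by
  simp only [partSubdiv, SimpleGraph.fromRel_adj]
  constructor
  · rintro ⟨hne, h | h⟩
    · rcases h with ⟨u', v', h1, h2, h3, h4⟩ | ⟨u', e', h1, h2, h3⟩
      · cases h1; cases h2; exact ⟨h3, h4⟩
      · simp at h2
    · rcases h with ⟨u', v', h1, h2, h3, h4⟩ | ⟨u', e', h1, h2, h3⟩
      · cases h1; cases h2; exact ⟨h3.symm, by rwa [Sym2.eq_swap]⟩
      · simp at h2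
  · rintro ⟨h1, h2⟩
    exact ⟨by simpa using h1.ne, Or.inl (Or.inl ⟨u, v, rfl, rfl, h1, h2⟩)⟩

lemma partSubdiv_adj_inl_inr {V : Type} (H : SimpleGraph V) (F : Set (Sym2 V)) (u : V)
    (e : {e : Sym2 V // e ∈ H.edgeSet ∩ F}) :
    (partSubdiv H F).Adj (Sum.inl u) (Sum.inr e) ↔ u ∈ (e : Sym2 V) := by
  simp only [partSubdiv, SimpleGraph.fromRel_adj]
  constructor
  · rintro ⟨hne, h | h⟩
    · rcases h with ⟨u', v', h1, h2, h3, h4⟩ | ⟨u', e', h1, h2, h3⟩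
      · simp at h2
      · cases h1; cases h2; exact h3
    · rcases h with ⟨u', v', h1, h2, h3, h4⟩ | ⟨u', e', h1, h2, h3⟩ <;> simp at h1
  · intro h
    exact ⟨by simp, Or.inl (Or.inr ⟨u, e, rfl, rfl, h⟩)⟩

lemma partSubdiv_adj_inr_inl {V : Type} (H : SimpleGraph V) (F : Set (Sym2 V)) (u : V)
    (e : {e : Sym2 V // e ∈ H.edgeSet ∩ F}) :
    (partSubdiv H F).Adj (Sum.inr e) (Sum.inl u) ↔ u ∈ (e : Sym2 V) := by
  rw [SimpleGraph.adj_comm]; exact partSubdiv_adj_inl_inr H F u e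

lemma partSubdiv_adj_inr_inr {V : Type} (H : SimpleGraph V) (F : Set (Sym2 V))
    (e f : {e : Sym2 V // e ∈ H.edgeSet ∩ F}) :
    ¬ (partSubdiv H F).Adj (Sum.inr e) (Sum.inr f) := by
  simp only [partSubdiv, SimpleGraph.fromRel_adj]
  rintro ⟨hne, h | h⟩ <;>
    rcases h with ⟨u', v', h1, h2, h3⟩ | ⟨u', e', h1, h2, h3⟩ <;> simp at h1

noncomputable def partSubdivEmptyIso {V : Type} (H : SimpleGraph V) :
    partSubdiv H (∅ : Set (Sym2 V)) ≃g H := by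
  haveI : IsEmpty {e : Sym2 V // e ∈ H.edgeSet ∩ (∅ : Set (Sym2 V))} :=
    ⟨fun e => by simpa using e.prop⟩
  exact ⟨Equiv.sumEmpty V _, by
    rintro (u | e) (v | f)
    · show H.Adj u v ↔ _
      rw [partSubdiv_adj_inl_inl]
      simp
    · exact isEmptyElim f
    · exact isEmptyElim e
    · exact isEmptyElim e⟩

noncomputable def partSubdivFullIso {V : Type} (H : SimpleGraph V) :
    partSubdiv H H.edgeSet ≃g oneSubdiv H :=
  ⟨Equiv.sumCongr (Equiv.refl V) (Equiv.setCongr (by simp)), by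
    rintro (u | e) (v | f) <;>
      simp only [Equiv.sumCongr_apply, Sum.map_inl, Sum.map_inr, Equiv.refl_apply]
    · rw [partSubdiv_adj_inl_inl]
      simp only [oneSubdiv_adj_inl_inl, false_iff, SimpleGraph.mem_edgeSet]
      exact fun h => h.2 h.1
    · rw [oneSubdiv_adj_inl_inr, partSubdiv_adj_inl_inr]
      rfl
    · rw [oneSubdiv_adj_inr_inl, partSubdiv_adj_inr_inl]
      rfl
    · simp only [partSubdiv_adj_inr_inr, iff_false, oneSubdiv_adj_inr_inr,
        not_false_eq_true]⟩

noncomputable def partSubdivInsertIso {V : Type} (H : SimpleGraph V) (F : Set (Sym2 V))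
    {a b : V} (hab : H.Adj a b) (hF : s(a,b) ∉ F) :
    edgeSubdiv (partSubdiv H F) (Sum.inl a) (Sum.inl b) ≃g
      partSubdiv H (insert s(a,b) F) := by
  classical
  set f : Option (V ⊕ {e : Sym2 V // e ∈ H.edgeSet ∩ F}) →
      (V ⊕ {e : Sym2 V // e ∈ H.edgeSet ∩ insert s(a,b) F}) := fun x => match x with
    | none => Sum.inr ⟨s(a,b), ⟨hab, Set.mem_insert _ _⟩⟩
    | some (Sum.inl v) => Sum.inl v
    | some (Sum.inr e) => Sum.inr ⟨e.val, ⟨e.prop.1, Set.mem_insert_of_mem _ e.prop.2⟩⟩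
    with hf
  have hbij : Function.Bijective f := by
    constructor
    · rintro (_ | (u | e)) (_ | (v | g)) h
      · rfl
      · simp only [hf, reduceCtorEq] at h
      · simp only [hf, Sum.inr.injEq, Subtype.mk.injEq] at h
        exact absurd ((Subtype.mk.inj h).symm ▸ g.prop.2) hF
      · simp only [hf, reduceCtorEq] at h
      · simp only [hf, Sum.inl.injEq] at h
        rw [h]
      · simp only [hf, reduceCtorEq] at h
      · simp only [hf, Sum.inr.injEq, Subtype.mk.injEq] at h
        exact absurd ((Subtype.mk.inj h) ▸ e.prop.2) hF
      · simp only [hf, reduceCtorEq] at h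
      · simp only [hf, Sum.inr.injEq, Subtype.mk.injEq] at h
        rw [show e = g from Subtype.ext (Subtype.mk.inj h)]
    · rintro (v | e)
      · exact ⟨some (Sum.inl v), rfl⟩
      · rcases e.prop.2 with h | h
        · exact ⟨none, by simp only [hf]; exact congrArg Sum.inr (Subtype.ext h.symm)⟩
        · exact ⟨some (Sum.inr ⟨e.val, ⟨e.prop.1, h⟩⟩), rfl⟩
  refine ⟨Equiv.ofBijective f hbij, ?_⟩
  rintro (_ | (u | e)) (_ | (v | g))
  · constructor
    · intro h; exact absurd rfl h.ne
    · intro h; exact absurd rfl h.ne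
  · show (partSubdiv H _).Adj (Sum.inr _) (Sum.inl v) ↔
      (edgeSubdiv _ _ _).Adj none (some (Sum.inl v))
    rw [partSubdiv_adj_inr_inl, edgeSubdiv_adj_none_some]
    simp [Sym2.mem_iff]
  · show (partSubdiv H _).Adj (Sum.inr _) (Sum.inr _) ↔
      (edgeSubdiv _ _ _).Adj none (some (Sum.inr g))
    rw [edgeSubdiv_adj_none_some]
    simp [partSubdiv_adj_inr_inr]
  · show (partSubdiv H _).Adj (Sum.inl u) (Sum.inr _) ↔
      (edgeSubdiv _ _ _).Adj (some (Sum.inl u)) none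
    rw [partSubdiv_adj_inl_inr, edgeSubdiv_adj_some_none]
    simp [Sym2.mem_iff]
  · show (partSubdiv H _).Adj (Sum.inl u) (Sum.inl v) ↔
      (edgeSubdiv _ _ _).Adj (some (Sum.inl u)) (some (Sum.inl v))
    rw [partSubdiv_adj_inl_inl, edgeSubdiv_adj_some_some, partSubdiv_adj_inl_inl]
    constructor
    · rintro ⟨h1, h2⟩
      rw [Set.mem_insert_iff] at h2
      push_neg at h2
      refine ⟨⟨h1, h2.2⟩, ?_⟩
      rintro (⟨h3, h4⟩ | ⟨h3, h4⟩) <;> simp only [Sum.inl.injEq] at h3 h4 <;>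
        apply h2.1 <;> rw [h3, h4]
      rw [Sym2.eq_swap]
    · rintro ⟨⟨h1, h2⟩, h3⟩
      refine ⟨h1, ?_⟩
      rw [Set.mem_insert_iff]
      push_neg
      refine ⟨?_, h2⟩
      intro h4
      rw [Sym2.eq_iff] at h4
      rcases h4 with ⟨rfl, rfl⟩ | ⟨rfl, rfl⟩
      · exact h3 (Or.inl ⟨rfl, rfl⟩)
      · exact h3 (Or.inr ⟨rfl, rfl⟩)
  · show (partSubdiv H _).Adj (Sum.inl u) (Sum.inr _) ↔
      (edgeSubdiv _ _ _).Adj (some (Sum.inl u)) (some (Sum.inr g))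
    rw [partSubdiv_adj_inl_inr, edgeSubdiv_adj_some_some, partSubdiv_adj_inl_inr]
    simp
  · show (partSubdiv H _).Adj (Sum.inr _) (Sum.inr _) ↔
      (edgeSubdiv _ _ _).Adj (some (Sum.inr e)) none
    rw [edgeSubdiv_adj_some_none]
    simp [partSubdiv_adj_inr_inr]
  · show (partSubdiv H _).Adj (Sum.inr _) (Sum.inl v) ↔
      (edgeSubdiv _ _ _).Adj (some (Sum.inr e)) (some (Sum.inl v))
    rw [partSubdiv_adj_inr_inl, edgeSubdiv_adj_some_some, partSubdiv_adj_inr_inl]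
    simp
  · show (partSubdiv H _).Adj (Sum.inr _) (Sum.inr _) ↔
      (edgeSubdiv _ _ _).Adj (some (Sum.inr e)) (some (Sum.inr g))
    rw [edgeSubdiv_adj_some_some]
    simp [partSubdiv_adj_inr_inr]

lemma exists_subdivision_iso_partSubdiv {V : Type} (H : SimpleGraph V)
    (F : Finset (Sym2 V)) :
    ↑F ⊆ H.edgeSet → ∃ (U : Type) (S : SimpleGraph U), IsSubdivision H S ∧
      Nonempty (S ≃g partSubdiv H ↑F) := by
  classical
  induction F using Finset.induction_on with
  | empty =>
    intro _
    refine ⟨V, H, IsSubdivision.refl H, ⟨?_⟩⟩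
    rw [Finset.coe_empty]
    exact (partSubdivEmptyIso H).symm
  | @insert e F he ih =>
    intro hsub
    have heE : e ∈ H.edgeSet := hsub (by simp)
    have hFsub : ↑F ⊆ H.edgeSet := fun x hx => hsub (by simp [hx])
    obtain ⟨U, S, hsub', ⟨φ⟩⟩ := ih hFsub
    clear hsub ih
    revert heE he
    induction e using Sym2.ind with
    | _ a b =>
      intro he heE
      have hab : H.Adj a b := H.mem_edgeSet.1 heE
      have hFe : s(a,b) ∉ (↑F : Set (Sym2 V)) := by simpa using he
      have hadj : (partSubdiv H ↑F).Adj (Sum.inl a) (Sum.inl b) :=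
        (partSubdiv_adj_inl_inl H ↑F a b).2 ⟨hab, hFe⟩
      have hSadj : S.Adj (φ.symm (Sum.inl a)) (φ.symm (Sum.inl b)) :=
        φ.symm.map_adj_iff.2 hadj
      refine ⟨Option U, edgeSubdiv S (φ.symm (Sum.inl a)) (φ.symm (Sum.inl b)),
        IsSubdivision.step _ _ _ _ hsub' hSadj, ⟨?_⟩⟩
      have ψ := edgeSubdivIso φ (φ.symm (Sum.inl a)) (φ.symm (Sum.inl b))
      rw [φ.apply_symm_apply, φ.apply_symm_apply] at ψ
      rw [Finset.coe_insert]
      exact ψ.trans (partSubdivInsertIso H ↑F hab hFe)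

lemma exists_subdivision_iso_oneSubdiv {V : Type} [Fintype V] (H : SimpleGraph V) :
    ∃ (U : Type) (S : SimpleGraph U), IsSubdivision H S ∧ Nonempty (S ≃g oneSubdiv H) := by
  classical
  have hfin : H.edgeSet.Finite := Set.toFinite _
  obtain ⟨U, S, h1, ⟨φ⟩⟩ := exists_subdivision_iso_partSubdiv H hfin.toFinset
    (by rw [Set.Finite.coe_toFinset])
  refine ⟨U, S, h1, ⟨?_⟩⟩
  rw [hfin.coe_toFinset] at φ
  exact φ.trans (partSubdivFullIso H)

lemma hasInducedSubdivision_base (n : ℕ) (J : SimpleGraph (Fin n)) :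
    HasInducedSubdivision (oneSubdiv (completeGraph (Fin n))) J := by
  obtain ⟨U, S, h1, ⟨φ⟩⟩ := exists_subdivision_iso_oneSubdiv J
  refine ⟨U, S, h1, ?_⟩
  set K := completeGraph (Fin n) with hK
  set s : Set (Fin n ⊕ K.edgeSet) := Set.range Sum.inl ∪
    {x | ∃ e : K.edgeSet, x = Sum.inr e ∧ (e : Sym2 (Fin n)) ∈ J.edgeSet} with hs
  have hmem : ∀ (e : K.edgeSet), Sum.inr e ∈ s → (e : Sym2 (Fin n)) ∈ J.edgeSet := by
    rintro e (⟨w, hw⟩ | ⟨e', he', hm⟩)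
    · simp at hw
    · cases he'
      exact hm
  refine ⟨s, ⟨?_⟩⟩
  refine RelIso.trans (?_ : (oneSubdiv K).induce s ≃g oneSubdiv J) φ.symm
  set f : ↥s → (Fin n ⊕ J.edgeSet) := fun x => match x with
    | ⟨Sum.inl v, _⟩ => Sum.inl v
    | ⟨Sum.inr e, h⟩ => Sum.inr ⟨e.val, hmem e h⟩
    with hf
  have hbij : Function.Bijective f := by
    constructor
    · rintro ⟨(v | e), hx⟩ ⟨(w | g), hy⟩ h
      · simp only [hf, Sum.inl.injEq] at h
        exact Subtype.ext (congrArg Sum.inl h)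
      · simp only [hf, reduceCtorEq] at h
      · simp only [hf, reduceCtorEq] at h
      · simp only [hf, Sum.inr.injEq, Subtype.mk.injEq] at h
        exact Subtype.ext (congrArg Sum.inr (Subtype.ext h))
    · rintro (v | e)
      · exact ⟨⟨Sum.inl v, Or.inl ⟨v, rfl⟩⟩, rfl⟩
      · have heK : (e : Sym2 (Fin n)) ∈ K.edgeSet :=
          SimpleGraph.edgeSet_mono le_top e.prop
        exact ⟨⟨Sum.inr ⟨e.val, heK⟩, Or.inr ⟨⟨e.val, heK⟩, rfl, e.prop⟩⟩, rfl⟩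
  refine ⟨Equiv.ofBijective f hbij, ?_⟩
  rintro ⟨(v | e), hx⟩ ⟨(w | g), hy⟩
  · show (oneSubdiv J).Adj (Sum.inl v) (Sum.inl w) ↔
      (oneSubdiv K).Adj (Sum.inl v) (Sum.inl w)
    simp [oneSubdiv_adj_inl_inl]
  · show (oneSubdiv J).Adj (Sum.inl v) (Sum.inr _) ↔
      (oneSubdiv K).Adj (Sum.inl v) (Sum.inr g)
    rw [oneSubdiv_adj_inl_inr, oneSubdiv_adj_inl_inr]
  · show (oneSubdiv J).Adj (Sum.inr _) (Sum.inl w) ↔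
      (oneSubdiv K).Adj (Sum.inr e) (Sum.inl w)
    rw [oneSubdiv_adj_inr_inl, oneSubdiv_adj_inr_inl]
  · show (oneSubdiv J).Adj (Sum.inr _) (Sum.inr _) ↔
      (oneSubdiv K).Adj (Sum.inr e) (Sum.inr g)
    simp [oneSubdiv_adj_inr_inr]

lemma hasInducedSubdivision_of_isSubdivision {X V W : Type} {J : SimpleGraph X}
    {G : SimpleGraph V} {S : SimpleGraph W} (hS : IsSubdivision G S)
    (h : HasInducedSubdivision G J) : HasInducedSubdivision S J := by
  revert h
  induction hS with
  | refl G => exact id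
  | step G H a b hsub hadj ih =>
    intro h
    exact hasInducedSubdivision_edgeSubdiv (ih h) hadj

/-- For every positive integer `n` and every graph `J` on `n` vertices,
every proper subdivision of `K_n` contains an induced subdivision of `J`. -/
theorem stmt_18 (n : ℕ) (hn : 0 < n) (J : SimpleGraph (Fin n))
    {W : Type} (S : SimpleGraph W)
    (hS : IsProperSubdivision (completeGraph (Fin n)) S) :
    HasInducedSubdivision S J :=
  hasInducedSubdivision_of_isSubdivision hS (hasInducedSubdivision_base n J)
end
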